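/- If 2 ≤ m ≤ n, then the general 2-position number of the complete bipartite graph K_{m,n} equals n, which equals its independence number. -/

import Mathlib

open Sum SimpleGraph Set

def IsGenDPos {V : Type*} (G : SimpleGraph V) (d : ℕ) (S : Set V) : Prop :=
  ∀ ⦃u v w : V⦄, u ∈ S → v ∈ S → w ∈ S → u ≠ v → u ≠ w → v ≠ w →
    G.dist u v + G.dist v w = G.dist u w → G.dist u w ≤ d → False

noncomputable def gpNum {V : Type*} (G : SimpleGraph V) (d : ℕ) : ℕ :=
  sSup {n | ∃ S : Set V, IsGenDPos G d S ∧ S.ncard = n}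

noncomputable def indepNum {V : Type*} (G : SimpleGraph V) : ℕ :=
  sSup {n | ∃ S : Set V, (∀ u ∈ S, ∀ v ∈ S, ¬ G.Adj u v) ∧ S.ncard = n}

section Aux
variable {m n : ℕ}

local notation "G" => completeBipartiteGraph (Fin m) (Fin n)

lemma adj_lr (a : Fin m) (b : Fin n) : (G).Adj (inl a) (inr b) := by simp

lemma not_adj_ll (a c : Fin m) : ¬ (G).Adj (inl a) (inl c) := by simp

lemma not_adj_rr (a c : Fin n) : ¬ (G).Adj (inr a) (inr c) := by simp

lemma dist_lr (a : Fin m) (b : Fin n) : (G).dist (inl a) (inr b) = 1 :=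
  SimpleGraph.dist_eq_one_iff_adj.mpr (adj_lr a b)

lemma dist_rl (b : Fin n) (a : Fin m) : (G).dist (inr b) (inl a) = 1 :=
  SimpleGraph.dist_eq_one_iff_adj.mpr (adj_lr a b).symm

lemma dist_ll (hn : 0 < n) {a c : Fin m} (h : a ≠ c) : (G).dist (inl a) (inl c) = 2 := by
  have b : Fin n := ⟨0, hn⟩
  have hle : (G).dist (inl a) (inl c) ≤ 2 := by
    simpa using SimpleGraph.dist_le
      (SimpleGraph.Walk.cons (adj_lr a b) (SimpleGraph.Walk.cons (adj_lr c b).symm SimpleGraph.Walk.nil))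
  have h0 : (G).dist (inl a) (inl c) ≠ 0 := by
    intro he
    rcases SimpleGraph.dist_eq_zero_iff_eq_or_not_reachable.mp he with he | hr
    · exact h (by simpa using he)
    · exact hr ((SimpleGraph.Adj.reachable (adj_lr a b)).trans
        (SimpleGraph.Adj.reachable (adj_lr c b).symm))
  have h1 : (G).dist (inl a) (inl c) ≠ 1 := fun he =>
    not_adj_ll a c (SimpleGraph.dist_eq_one_iff_adj.mp he)
  omega

lemma dist_rr (hm : 0 < m) {a c : Fin n} (h : a ≠ c) : (G).dist (inr a) (inr c) = 2 := by
  have b : Fin m := ⟨0, hm⟩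
  have hle : (G).dist (inr a) (inr c) ≤ 2 := by
    simpa using SimpleGraph.dist_le
      (SimpleGraph.Walk.cons (adj_lr b a).symm (SimpleGraph.Walk.cons (adj_lr b c) SimpleGraph.Walk.nil))
  have h0 : (G).dist (inr a) (inr c) ≠ 0 := by
    intro he
    rcases SimpleGraph.dist_eq_zero_iff_eq_or_not_reachable.mp he with he | hr
    · exact h (by simpa using he)
    · exact hr ((SimpleGraph.Adj.reachable (adj_lr b a).symm).trans
        (SimpleGraph.Adj.reachable (adj_lr b c)))
  have h1 : (G).dist (inr a) (inr c) ≠ 1 := fun he =>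
    not_adj_rr a c (SimpleGraph.dist_eq_one_iff_adj.mp he)
  omega

lemma ncard_range_inr : (Set.range (inl : Fin m → Fin m ⊕ Fin n)).ncard = m ∧
    (Set.range (inr : Fin n → Fin m ⊕ Fin n)).ncard = n := by
  constructor
  · rw [← Nat.card_coe_set_eq, Nat.card_range_of_injective Sum.inl_injective]
    simp
  · rw [← Nat.card_coe_set_eq, Nat.card_range_of_injective Sum.inr_injective]
    simp

lemma sub_side (S : Set (Fin m ⊕ Fin n)) (hmn : m ≤ n)
    (h : S ⊆ Set.range inl ∨ S ⊆ Set.range inr) : S.ncard ≤ n := by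
  have hfin : S.Finite := Set.toFinite S
  rcases h with h | h
  · calc S.ncard ≤ (Set.range (inl : Fin m → Fin m ⊕ Fin n)).ncard :=
        Set.ncard_le_ncard h (Set.toFinite _)
      _ = m := ncard_range_inr.1
      _ ≤ n := hmn
  · calc S.ncard ≤ (Set.range (inr : Fin n → Fin m ⊕ Fin n)).ncard :=
        Set.ncard_le_ncard h (Set.toFinite _)
      _ = n := ncard_range_inr.2

lemma gp_upper (hm : 2 ≤ m) (hmn : m ≤ n) (S : Set (Fin m ⊕ Fin n))
    (hS : IsGenDPos G 2 S) : S.ncard ≤ n := by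
  have hn : 0 < n := lt_of_lt_of_le (by omega) hmn
  by_cases hL : ∃ a : Fin m, inl a ∈ S
  · by_cases hR : ∃ b : Fin n, inr b ∈ S
    · obtain ⟨a, ha⟩ := hL
      obtain ⟨b, hb⟩ := hR
      have hsub : S ⊆ {inl a, inr b} := by
        intro w hw
        rcases w with c | c
        · left
          by_contra hne
          have hac : a ≠ c := fun h => hne (by simp [h])
          exact hS ha hb hw (by simp) (by simpa using hac) (by simp)
            (by rw [dist_lr, dist_rl, dist_ll hn hac]) (by rw [dist_ll hn hac])
        · right
          by_contra hne
          have hbc : b ≠ c := fun h => hne (by simp [h])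
          exact hS hb ha hw (by simp) (by simpa using hbc) (by simp)
            (by rw [dist_rl, dist_lr, dist_rr (by omega) hbc]) (by rw [dist_rr (by omega) hbc])
      calc S.ncard ≤ ({inl a, inr b} : Set (Fin m ⊕ Fin n)).ncard :=
          Set.ncard_le_ncard hsub (Set.toFinite _)
        _ ≤ 2 := Set.ncard_insert_le _ _ |>.trans (by simp)
        _ ≤ n := by omega
    · push_neg at hR
      refine sub_side S hmn (Or.inl ?_)
      intro w hw
      rcases w with c | c
      · exact ⟨c, rfl⟩
      · exact absurd hw (hR c)
  · push_neg at hL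
    refine sub_side S hmn (Or.inr ?_)
    intro w hw
    rcases w with c | c
    · exact absurd hw (hL c)
    · exact ⟨c, rfl⟩

lemma gp_mem (hm : 2 ≤ m) (hmn : m ≤ n) :
    n ∈ {k | ∃ S : Set (Fin m ⊕ Fin n), IsGenDPos G 2 S ∧ S.ncard = k} := by
  refine ⟨Set.range inr, ?_, ncard_range_inr.2⟩
  rintro u v w ⟨a, rfl⟩ ⟨b, rfl⟩ ⟨c, rfl⟩ huv huw hvw heq _
  have hab : a ≠ b := fun h => huv (by simp [h])
  have hbc : b ≠ c := fun h => hvw (by simp [h])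
  have hac : a ≠ c := fun h => huw (by simp [h])
  rw [dist_rr (by omega) hab, dist_rr (by omega) hbc, dist_rr (by omega) hac] at heq
  omega

lemma indep_upper (hmn : m ≤ n) (S : Set (Fin m ⊕ Fin n))
    (hS : ∀ u ∈ S, ∀ v ∈ S, ¬ (G).Adj u v) : S.ncard ≤ n := by
  by_cases hL : ∃ a : Fin m, inl a ∈ S
  · obtain ⟨a, ha⟩ := hL
    refine sub_side S hmn (Or.inl ?_)
    intro w hw
    rcases w with c | c
    · exact ⟨c, rfl⟩
    · exact absurd (adj_lr a c) (hS _ ha _ hw)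
  · push_neg at hL
    refine sub_side S hmn (Or.inr ?_)
    intro w hw
    rcases w with c | c
    · exact absurd hw (hL c)
    · exact ⟨c, rfl⟩

end Aux

/-- For 2 ≤ m ≤ n, gp_2(K_{m,n}) = n = α(K_{m,n}). -/
theorem stmt_18 (m n : ℕ) (hm : 2 ≤ m) (hmn : m ≤ n) :
    gpNum (completeBipartiteGraph (Fin m) (Fin n)) 2 = n ∧
      _root_.indepNum (completeBipartiteGraph (Fin m) (Fin n)) = n := by
  constructor
  · apply le_antisymm
    · apply csSup_le ⟨n, gp_mem hm hmn⟩
      rintro k ⟨S, hS, rfl⟩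
      exact gp_upper hm hmn S hS
    · exact le_csSup ⟨n, by rintro k ⟨S, hS, rfl⟩; exact gp_upper hm hmn S hS⟩ (gp_mem hm hmn)
  · have hmem : n ∈ {k | ∃ S : Set (Fin m ⊕ Fin n),
        (∀ u ∈ S, ∀ v ∈ S, ¬ (completeBipartiteGraph (Fin m) (Fin n)).Adj u v) ∧ S.ncard = k} := by
      refine ⟨Set.range inr, ?_, ncard_range_inr.2⟩
      rintro u ⟨a, rfl⟩ v ⟨b, rfl⟩
      exact not_adj_rr a b
    apply le_antisymm
    · apply csSup_le ⟨n, hmem⟩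
      rintro k ⟨S, hS, rfl⟩
      exact indep_upper hmn S hS
    · exact le_csSup ⟨n, by rintro k ⟨S, hS, rfl⟩; exact indep_upper hmn S hS⟩ hmem
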